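/- arXiv:2312.14420 — 3 statements merged into one kernel-verified Lean document; each statement's English description precedes it below -/
import Mathlib

section
/- Let w₁, w₂, … be i.i.d. random variables, strictly positive almost surely, with mean μ = E w₁ > 0, variance σ² = Var(w₁) > 0, and E w₁^k < ∞ for every positive integer k. For each p set w̄_p = p^{−1}∑_{j=1}^p w_j. Then lim_{p→∞} E[(w₁/w̄_p − 1)⁴] = E[(w₁/μ − 1)⁴]. -/
open MeasureTheory ProbabilityTheory Filter
open scoped BigOperators Topology

/-- `exp (-x) ≤ 1 - x + x²/2` for `x ≥ 0`. -/
lemma exp_neg_le_one_sub_add_sq_half {x : ℝ} (hx : 0 ≤ x) :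
    Real.exp (-x) ≤ 1 - x + x ^ 2 / 2 := by
  have h1 : 1 + x + x ^ 2 / 2 ≤ Real.exp x := by
    have h := Real.sum_le_exp_of_nonneg hx 3
    simp [Finset.sum_range_succ] at h
    nlinarith [h]
  have h2 : Real.exp (-x) * Real.exp x = 1 := by
    rw [← Real.exp_add]; simp
  have h3 : (0:ℝ) < 1 - x + x ^ 2 / 2 := by nlinarith [sq_nonneg (x - 1)]
  nlinarith [Real.exp_pos x, Real.exp_pos (-x), sq_nonneg (x * x), h1, h2, h3]

set_option maxHeartbeats 2000000 in
/-- For i.i.d. strictly positive random variables with all moments finite,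
`lim_{p→∞} E[(w₁/w̄_p − 1)⁴] = E[(w₁/μ − 1)⁴]`. -/
theorem fourth_moment_self_normalized_limit
    {Ω : Type*} [MeasurableSpace Ω] (P : Measure Ω) [IsProbabilityMeasure P]
    (w : ℕ → Ω → ℝ) (μ σ : ℝ)
    (hmeas : ∀ i, Measurable (w i))
    (hindep : iIndepFun w P)
    (hident : ∀ i j, IdentDistrib (w i) (w j) P P)
    (hpos : ∀ i, ∀ᵐ ω ∂P, 0 < w i ω)
    (hμ : ∫ ω, w 0 ω ∂P = μ) (hμpos : 0 < μ)
    (hσ : ∫ ω, (w 0 ω - μ) ^ 2 ∂P = σ ^ 2) (hσpos : 0 < σ)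
    (hmom : ∀ k : ℕ, Integrable (fun ω => (w 0 ω) ^ k) P) :
    Tendsto (fun p : ℕ => ∫ ω, (w 0 ω / ((∑ j ∈ Finset.range p, w j ω) / p) - 1) ^ 4 ∂P)
      atTop (𝓝 (∫ ω, (w 0 ω / μ - 1) ^ 4 ∂P)) := by
  classical
  have hw1 : Integrable (fun ω => w 0 ω) P := by simpa using hmom 1
  have hae : ∀ᵐ ω ∂P, ∀ i, 0 < w i ω := (ae_all_iff).2 hpos
  -- abbreviations
  set F : ℕ → Ω → ℝ :=
    fun p ω => (w 0 ω / ((∑ j ∈ Finset.range p, w j ω) / (p : ℝ)) - 1) ^ 4 with hFdef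
  set A : ℕ → Set Ω :=
    fun p => {ω | μ / 2 ≤ (∑ j ∈ Finset.range p, w j ω) / (p : ℝ)} with hAdef
  have hmeasS : ∀ p : ℕ, Measurable (fun ω => (∑ j ∈ Finset.range p, w j ω) / (p : ℝ)) :=
    fun p => (Finset.measurable_sum _ (fun i _ => hmeas i)).div_const _
  have hmeasF : ∀ p, Measurable (F p) :=
    fun p => (((hmeas 0).div (hmeasS p)).sub measurable_const).pow_const 4
  have hAmeas : ∀ p, MeasurableSet (A p) :=
    fun p => measurableSet_le measurable_const (hmeasS p)
  -- strong law of large numbers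
  have hslln : ∀ᵐ ω ∂P,
      Tendsto (fun p : ℕ => (∑ j ∈ Finset.range p, w j ω) / (p : ℝ)) atTop (𝓝 μ) := by
    have h := ProbabilityTheory.strong_law_ae (μ := P) w hw1
      (fun i j hij => hindep.indepFun hij) (fun i => hident i 0)
    have hμ' : (P[w 0]) = μ := hμ
    rw [hμ'] at h
    filter_upwards [h] with ω hω
    exact hω.congr (fun n => by rw [smul_eq_mul, inv_mul_eq_div])
  -- second moment
  set M : ℝ := ∫ ω, (w 0 ω) ^ 2 ∂P with hMdef
  have hM2 : Integrable (fun ω => (w 0 ω) ^ 2) P := hmom 2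
  have hMval : M = σ ^ 2 + μ ^ 2 := by
    have hexp : (fun ω => (w 0 ω - μ) ^ 2)
        = fun ω => ((w 0 ω) ^ 2 - (2 * μ) * (w 0 ω) + μ ^ 2) := by
      funext ω; ring
    rw [hexp] at hσ
    have hsub : Integrable (fun ω => (w 0 ω) ^ 2 - 2 * μ * w 0 ω) P :=
      hM2.sub (hw1.const_mul (2 * μ))
    rw [integral_add hsub (integrable_const _),
      integral_sub hM2 (hw1.const_mul (2 * μ)), integral_const_mul, hμ] at hσ
    simp only [integral_const, measure_univ, ENNReal.toReal_one, smul_eq_mul, one_mul, probReal_univ] at hσ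
    rw [← hMdef] at hσ
    nlinarith [hσ]
  have hMpos : 0 < M := by rw [hMval]; positivity
  clear_value M
  -- choice of the Chernoff parameter
  set l : ℝ := min (μ / (2 * M)) (1 / μ) with hldef
  have hlpos : 0 < l := lt_min (by positivity) (by positivity)
  have hlM : l * M ≤ μ / 2 := by
    have h1 : l ≤ μ / (2 * M) := min_le_left _ _
    have := mul_le_mul_of_nonneg_right h1 hMpos.le
    calc l * M ≤ μ / (2 * M) * M := this
      _ = μ / 2 := by field_simp
  have hlμ : l * μ ≤ 1 := by
    have h1 : l ≤ 1 / μ := min_le_right _ _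
    have := mul_le_mul_of_nonneg_right h1 hμpos.le
    calc l * μ ≤ 1 / μ * μ := this
      _ = 1 := by field_simp
  clear_value l
  -- bound on the mgf
  have hmgf_le : mgf (w 0) P (-l) ≤ 1 - l * μ + l ^ 2 / 2 * M := by
    have hptwise : ∀ᵐ ω ∂P,
        Real.exp (-l * w 0 ω) ≤ 1 - l * w 0 ω + l ^ 2 / 2 * (w 0 ω) ^ 2 := by
      filter_upwards [hpos 0] with ω hω
      have h := exp_neg_le_one_sub_add_sq_half (mul_nonneg hlpos.le hω.le)
      calc Real.exp (-l * w 0 ω) = Real.exp (-(l * w 0 ω)) := by rw [neg_mul]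
        _ ≤ 1 - l * w 0 ω + (l * w 0 ω) ^ 2 / 2 := h
        _ = 1 - l * w 0 ω + l ^ 2 / 2 * (w 0 ω) ^ 2 := by ring
    have hintexp : Integrable (fun ω => Real.exp (-l * w 0 ω)) P := by
      refine Integrable.mono' (integrable_const 1)
        (Real.measurable_exp.comp ((hmeas 0).const_mul (-l))).aestronglyMeasurable ?_
      filter_upwards [hpos 0] with ω hω
      rw [Real.norm_eq_abs, abs_of_pos (Real.exp_pos _)]
      exact Real.exp_le_one_iff.2 (by nlinarith)
    have hintquad : Integrable (fun ω => 1 - l * w 0 ω + l ^ 2 / 2 * (w 0 ω) ^ 2) P :=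
      ((integrable_const 1).sub (hw1.const_mul l)).add (hM2.const_mul _)
    have h := integral_mono_ae hintexp hintquad hptwise
    have hval : ∫ ω, (1 - l * w 0 ω + l ^ 2 / 2 * (w 0 ω) ^ 2) ∂P
        = 1 - l * μ + l ^ 2 / 2 * M := by
      have hsub2 : Integrable (fun ω => 1 - l * w 0 ω) P :=
        (integrable_const 1).sub (hw1.const_mul l)
      rw [integral_add hsub2 (hM2.const_mul _),
        integral_sub (integrable_const 1) (hw1.const_mul l), integral_const_mul,
        integral_const_mul, hμ, hMdef]
      simp
    rw [hval] at h
    exact h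
  -- the geometric ratio
  set r : ℝ := Real.exp (l * μ / 2) * mgf (w 0) P (-l) with hrdef
  have hr0 : 0 ≤ r := mul_nonneg (Real.exp_pos _).le mgf_nonneg
  have hden : 0 < 1 - l * μ / 2 := by nlinarith
  have hr1 : r < 1 := by
    have hexple : Real.exp (l * μ / 2) ≤ (1 - l * μ / 2)⁻¹ := by
      have h1 : 1 - l * μ / 2 ≤ Real.exp (-(l * μ / 2)) := by
        have := Real.add_one_le_exp (-(l * μ / 2)); linarith
      rw [Real.exp_neg] at h1
      have h3 : (1 - l * μ / 2) * Real.exp (l * μ / 2) ≤ 1 := by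
        have := mul_le_mul_of_nonneg_right h1 (Real.exp_pos (l * μ / 2)).le
        rwa [inv_mul_cancel₀ (Real.exp_pos _).ne'] at this
      have h5 : (1 - l * μ / 2)⁻¹ * (1 - l * μ / 2) = 1 := inv_mul_cancel₀ hden.ne'
      nlinarith [Real.exp_pos (l * μ / 2)]
    have hq : 1 - l * μ + l ^ 2 / 2 * M < 1 - l * μ / 2 := by nlinarith
    have hA0 : (0:ℝ) ≤ 1 - l * μ + l ^ 2 / 2 * M := le_trans mgf_nonneg hmgf_le
    calc r ≤ Real.exp (l * μ / 2) * (1 - l * μ + l ^ 2 / 2 * M) := by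
          exact mul_le_mul_of_nonneg_left hmgf_le (Real.exp_pos _).le
      _ ≤ (1 - l * μ / 2)⁻¹ * (1 - l * μ + l ^ 2 / 2 * M) :=
          mul_le_mul_of_nonneg_right hexple hA0
      _ < (1 - l * μ / 2)⁻¹ * (1 - l * μ / 2) :=
          mul_lt_mul_of_pos_left hq (inv_pos.2 hden)
      _ = 1 := inv_mul_cancel₀ hden.ne'
  -- Chernoff bound
  have hcher : ∀ p : ℕ,
      (P {ω | (∑ j ∈ Finset.range p, w j ω) ≤ (p : ℝ) * μ / 2}).toReal ≤ r ^ p := by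
    intro p
    have hXeq : (∑ j ∈ Finset.range p, w j) = (fun ω => ∑ j ∈ Finset.range p, w j ω) := by
      funext ω; simp
    have hint : Integrable (fun ω => Real.exp (-l * ∑ j ∈ Finset.range p, w j ω)) P := by
      refine Integrable.mono' (integrable_const 1)
        (Real.measurable_exp.comp
          ((Finset.measurable_sum _ (fun i _ => hmeas i)).const_mul (-l))).aestronglyMeasurable ?_
      filter_upwards [hae] with ω hω
      rw [Real.norm_eq_abs, abs_of_pos (Real.exp_pos _)]
      refine Real.exp_le_one_iff.2 ?_
      have hs : 0 ≤ ∑ j ∈ Finset.range p, w j ω :=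
        Finset.sum_nonneg fun j _ => (hω j).le
      nlinarith
    have h := measure_le_le_exp_mul_mgf (μ := P)
      (X := fun ω => ∑ j ∈ Finset.range p, w j ω)
      ((p : ℝ) * μ / 2) (neg_nonpos.2 hlpos.le) hint
    rw [← hXeq] at h
    rw [hindep.mgf_sum hmeas (Finset.range p)] at h
    have heq : ∀ j ∈ Finset.range p, mgf (w j) P (-l) = mgf (w 0) P (-l) := by
      intro j _
      have hid : IdentDistrib (fun ω => Real.exp (-l * w j ω))
          (fun ω => Real.exp (-l * w 0 ω)) P P :=
        (hident j 0).comp (Real.measurable_exp.comp (measurable_const_mul (-l)))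
      exact hid.integral_eq
    rw [Finset.prod_congr rfl heq, Finset.prod_const, Finset.card_range] at h
    refine le_trans (le_of_eq ?_) (h.trans (le_of_eq ?_))
    · congr 1
    rw [hrdef, mul_pow, ← Real.exp_nat_mul]
    congr 2
    ring
  -- tail bound for the complement of A p
  have hPcompl : ∀ p : ℕ, 1 ≤ p → (P ((A p)ᶜ)).toReal ≤ r ^ p := by
    intro p hp
    refine le_trans ?_ (hcher p)
    refine ENNReal.toReal_mono (measure_ne_top _ _) (measure_mono ?_)
    intro ω hω
    simp only [hAdef, Set.mem_compl_iff, Set.mem_setOf_eq, not_le] at hω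
    simp only [Set.mem_setOf_eq]
    have hp' : (0:ℝ) < p := by exact_mod_cast hp
    have := (div_lt_iff₀ hp').1 hω
    nlinarith
  -- uniform (in ω) bound on F p
  have hFbound : ∀ p : ℕ, ∀ᵐ ω ∂P, F p ω ≤ (p : ℝ) ^ 4 + 1 := by
    intro p
    filter_upwards [hae] with ω hω
    simp only [hFdef]
    rcases Nat.eq_zero_or_pos p with h0 | hp
    · subst h0; norm_num
    · have hp1 : (1:ℝ) ≤ (p : ℝ) := by exact_mod_cast hp
      have hsum_pos : 0 < ∑ j ∈ Finset.range p, w j ω :=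
        Finset.sum_pos (fun j _ => hω j) ⟨0, Finset.mem_range.2 hp⟩
      have hppos : (0:ℝ) < p := by positivity
      have hS_pos : 0 < (∑ j ∈ Finset.range p, w j ω) / (p : ℝ) := div_pos hsum_pos hppos
      have hle : w 0 ω ≤ ∑ j ∈ Finset.range p, w j ω :=
        Finset.single_le_sum (fun j _ => (hω j).le) (Finset.mem_range.2 hp)
      set x : ℝ := w 0 ω / ((∑ j ∈ Finset.range p, w j ω) / (p : ℝ)) with hxdef
      have hx0 : 0 < x := div_pos (hω 0) hS_pos
      have hx : x ≤ p := by
        rw [hxdef, div_le_iff₀ hS_pos]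
        calc w 0 ω ≤ ∑ j ∈ Finset.range p, w j ω := hle
          _ = (p : ℝ) * ((∑ j ∈ Finset.range p, w j ω) / (p : ℝ)) := by
              field_simp
      clear_value x
      rcases le_or_gt x 1 with h | h
      · have h2 : (x - 1) ^ 2 ≤ 1 := by nlinarith
        have h4 : (x - 1) ^ 4 ≤ 1 := by nlinarith
        have hp4 : (1:ℝ) ≤ (p : ℝ) ^ 4 := one_le_pow₀ hp1
        linarith
      · have h4 : (x - 1) ^ 4 ≤ (p : ℝ) ^ 4 :=
          pow_le_pow_left₀ (by linarith) (by linarith) 4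
        linarith
  -- integrability of F p
  have hFint : ∀ p : ℕ, Integrable (F p) P := by
    intro p
    refine Integrable.mono' (integrable_const ((p : ℝ) ^ 4 + 1))
      (hmeasF p).aestronglyMeasurable ?_
    filter_upwards [hFbound p] with ω h
    simp only [hFdef] at h ⊢
    rw [Real.norm_eq_abs, abs_of_nonneg (by positivity)]
    exact h
  -- the dominating function
  have hgint : Integrable (fun ω => (2 * w 0 ω / μ + 1) ^ 4) P := by
    have hrw : (fun ω => (2 * w 0 ω / μ + 1) ^ 4)
        = fun ω => (2 / μ) ^ 4 * (w 0 ω) ^ 4 + 4 * (2 / μ) ^ 3 * (w 0 ω) ^ 3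
            + 6 * (2 / μ) ^ 2 * (w 0 ω) ^ 2 + 4 * (2 / μ) * (w 0 ω) ^ 1 + 1 := by
      funext ω; ring
    rw [hrw]
    exact (((((hmom 4).const_mul _).add ((hmom 3).const_mul _)).add
      ((hmom 2).const_mul _)).add ((hmom 1).const_mul _)).add (integrable_const 1)
  -- main term: dominated convergence
  have hmain : Tendsto (fun p : ℕ => ∫ ω, (A p).indicator (F p) ω ∂P) atTop
      (𝓝 (∫ ω, (w 0 ω / μ - 1) ^ 4 ∂P)) := by
    refine tendsto_integral_of_dominated_convergence (fun ω => (2 * w 0 ω / μ + 1) ^ 4)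
      (fun p => ((hmeasF p).indicator (hAmeas p)).aestronglyMeasurable) hgint ?_ ?_
    · intro p
      filter_upwards [hae] with ω hω
      rw [Real.norm_eq_abs]
      by_cases hmem : ω ∈ A p
      · rw [Set.indicator_of_mem hmem]
        simp only [hFdef]
        rw [abs_of_nonneg (by positivity)]
        have hS : μ / 2 ≤ (∑ j ∈ Finset.range p, w j ω) / (p : ℝ) := hmem
        have hS_pos : 0 < (∑ j ∈ Finset.range p, w j ω) / (p : ℝ) := by linarith
        set x : ℝ := w 0 ω / ((∑ j ∈ Finset.range p, w j ω) / (p : ℝ)) with hxdef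
        have hx0 : 0 ≤ x := le_of_lt (div_pos (hω 0) hS_pos)
        have hxle : x ≤ 2 * w 0 ω / μ := by
          rw [hxdef, show 2 * w 0 ω / μ = w 0 ω / (μ / 2) by field_simp]
          exact div_le_div_of_nonneg_left (hω 0).le (by linarith) hS
        have hy0 : 0 ≤ 2 * w 0 ω / μ := le_trans hx0 hxle
        clear_value x
        have habs : |x - 1| ≤ 2 * w 0 ω / μ + 1 :=
          abs_le.2 ⟨by linarith, by linarith⟩
        calc (x - 1) ^ 4 = |x - 1| ^ 4 := by
              rw [pow_abs, abs_of_nonneg (by positivity)]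
          _ ≤ (2 * w 0 ω / μ + 1) ^ 4 := pow_le_pow_left₀ (abs_nonneg _) habs 4
      · rw [Set.indicator_of_notMem hmem]
        simp only [abs_zero]
        positivity
    · filter_upwards [hae, hslln] with ω hω hSω
      have hF_tend : Tendsto
          (fun p : ℕ => (w 0 ω / ((∑ j ∈ Finset.range p, w j ω) / (p : ℝ)) - 1) ^ 4)
          atTop (𝓝 ((w 0 ω / μ - 1) ^ 4)) :=
        ((tendsto_const_nhds.div hSω hμpos.ne').sub_const 1).pow 4
      have hev : ∀ᶠ p : ℕ in atTop,
          (w 0 ω / ((∑ j ∈ Finset.range p, w j ω) / (p : ℝ)) - 1) ^ 4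
            = (A p).indicator (F p) ω := by
        have hge : ∀ᶠ p : ℕ in atTop,
            μ / 2 ≤ (∑ j ∈ Finset.range p, w j ω) / (p : ℝ) :=
          Filter.Tendsto.eventually_const_le (by linarith) hSω
        filter_upwards [hge] with p hp
        rw [Set.indicator_of_mem (show ω ∈ A p from hp)]
      exact hF_tend.congr' hev
  -- complement term tends to zero
  have hcompl : Tendsto (fun p : ℕ => ∫ ω, ((A p)ᶜ).indicator (F p) ω ∂P) atTop (𝓝 0) := by
    have hub : ∀ p : ℕ, 1 ≤ p →
        ∫ ω, ((A p)ᶜ).indicator (F p) ω ∂P ≤ ((p : ℝ) ^ 4 + 1) * r ^ p := by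
      intro p hp
      have h1 : ∫ ω, ((A p)ᶜ).indicator (F p) ω ∂P
          ≤ ∫ ω, ((A p)ᶜ).indicator (fun _ => (p : ℝ) ^ 4 + 1) ω ∂P := by
        refine integral_mono_ae ((hFint p).indicator (hAmeas p).compl)
          ((integrable_const _).indicator (hAmeas p).compl) ?_
        filter_upwards [hFbound p] with ω hω
        by_cases hmem : ω ∈ (A p)ᶜ
        · rw [Set.indicator_of_mem hmem, Set.indicator_of_mem hmem]; exact hω
        · rw [Set.indicator_of_notMem hmem, Set.indicator_of_notMem hmem]
      have h2 : ∫ ω, ((A p)ᶜ).indicator (fun _ => (p : ℝ) ^ 4 + 1) ω ∂P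
          = (P ((A p)ᶜ)).toReal * ((p : ℝ) ^ 4 + 1) := by
        rw [integral_indicator_const _ (hAmeas p).compl, smul_eq_mul, measureReal_def]
      calc ∫ ω, ((A p)ᶜ).indicator (F p) ω ∂P
          ≤ (P ((A p)ᶜ)).toReal * ((p : ℝ) ^ 4 + 1) := h2 ▸ h1
        _ ≤ r ^ p * ((p : ℝ) ^ 4 + 1) :=
            mul_le_mul_of_nonneg_right (hPcompl p hp) (by positivity)
        _ = ((p : ℝ) ^ 4 + 1) * r ^ p := by ring
    have hlb : ∀ p : ℕ, 0 ≤ ∫ ω, ((A p)ᶜ).indicator (F p) ω ∂P := by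
      intro p
      refine integral_nonneg fun ω => Set.indicator_nonneg (fun ω _ => ?_) ω
      simp only [hFdef]
      positivity
    have hgeo : Tendsto (fun p : ℕ => ((p : ℝ) ^ 4 + 1) * r ^ p) atTop (𝓝 0) := by
      have h4 : Summable (fun p : ℕ => (p : ℝ) ^ 4 * r ^ p) :=
        summable_pow_mul_geometric_of_norm_lt_one 4
          (by rwa [Real.norm_eq_abs, abs_of_nonneg hr0])
      have h0 : Summable (fun p : ℕ => r ^ p) := summable_geometric_of_lt_one hr0 hr1
      have := (h4.add h0).tendsto_atTop_zero
      refine this.congr (fun p => by ring)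
    refine tendsto_of_tendsto_of_tendsto_of_le_of_le' tendsto_const_nhds hgeo
      (Eventually.of_forall hlb) (eventually_atTop.2 ⟨1, hub⟩)
  -- splitting the integral
  have hsplit : ∀ p : ℕ, ∫ ω, F p ω ∂P
      = (∫ ω, (A p).indicator (F p) ω ∂P) + ∫ ω, ((A p)ᶜ).indicator (F p) ω ∂P := by
    intro p
    rw [← integral_add ((hFint p).indicator (hAmeas p)) ((hFint p).indicator (hAmeas p).compl)]
    refine integral_congr_ae (Eventually.of_forall fun ω => ?_)
    exact (Set.indicator_self_add_compl_apply (A p) (F p) ω).symm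
  have hfinal := hmain.add hcompl
  rw [add_zero] at hfinal
  exact hfinal.congr (fun p => (hsplit p).symm)
end

section
/- Let p ≥ 3 and let w₁, …, w_p be i.i.d. random variables, strictly positive almost surely, with w̄ = p^{−1}∑_{j=1}^p w_j, and set R_j = w_j/w̄ − 1 for 1 ≤ j ≤ p. Then for all pairwise distinct indices i, j, k, E[R_i² R_j R_k] = η₄/((p − 1)(p − 2)) − η₁₂/(p − 2), where η₄ = E[R₁⁴] and η₁₂ = E[R₁² R₂²]. -/
open MeasureTheory ProbabilityTheory
open scoped BigOperators

/-- For `p ≥ 3` i.i.d. strictly positive random variables with sample mean `w̄` and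
`R_j = w_j/w̄ − 1`: for pairwise distinct `i, j, k`,
`E[R_i² R_j R_k] = η₄/((p−1)(p−2)) − η₁₂/(p−2)` where `η₄ = E[R₁⁴]`, `η₁₂ = E[R₁² R₂²]`. -/
theorem compositional_square_cross_moment
    {Ω : Type*} [MeasurableSpace Ω] (P : Measure Ω) [IsProbabilityMeasure P]
    (p : ℕ) (hp : 3 ≤ p) (w : Fin p → Ω → ℝ)
    (hmeas : ∀ j, Measurable (w j))
    (hindep : iIndepFun w P)
    (hident : ∀ i j, IdentDistrib (w i) (w j) P P)
    (hpos : ∀ j, ∀ᵐ ω ∂P, 0 < w j ω)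
    (η₄ η₁₂ : ℝ)
    (hη₄ : η₄ = ∫ ω, (w ⟨0, by omega⟩ ω / ((∑ k, w k ω) / p) - 1) ^ 4 ∂P)
    (hη₁₂ : η₁₂ = ∫ ω, (w ⟨0, by omega⟩ ω / ((∑ k, w k ω) / p) - 1) ^ 2 *
        (w ⟨1, by omega⟩ ω / ((∑ k, w k ω) / p) - 1) ^ 2 ∂P) :
    ∀ i j k, i ≠ j → j ≠ k → i ≠ k →
      ∫ ω, (w i ω / ((∑ l, w l ω) / p) - 1) ^ 2 *
           (w j ω / ((∑ l, w l ω) / p) - 1) *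
           (w k ω / ((∑ l, w l ω) / p) - 1) ∂P =
        η₄ / (((p : ℝ) - 1) * ((p : ℝ) - 2)) - η₁₂ / ((p : ℝ) - 2) := by
  intro i j k hij hjk hik
  classical
  haveI : NeZero p := ⟨by omega⟩
  have hp3 : (3:ℝ) ≤ (p:ℝ) := by exact_mod_cast hp
  have hpR : (0:ℝ) < p := by linarith
  set i0 : Fin p := ⟨0, by omega⟩ with hi0
  set i1 : Fin p := ⟨1, by omega⟩ with hi1
  have h01 : i0 ≠ i1 := by simp [hi0, hi1, Fin.ext_iff]
  -- the joint law
  set f : Ω → (Fin p → ℝ) := fun ω l => w l ω with hfdef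
  have hf : Measurable f := measurable_pi_lambda _ hmeas
  set μ : Measure (Fin p → ℝ) := P.map f with hμdef
  haveI : IsProbabilityMeasure μ := Measure.isProbabilityMeasure_map hf.aemeasurable
  set ν : Measure ℝ := P.map (w i0) with hνdef
  haveI : IsProbabilityMeasure ν := Measure.isProbabilityMeasure_map (hmeas i0).aemeasurable
  have hνl : ∀ l, P.map (w l) = ν := fun l => (hident l i0).map_eq
  have hμpi : μ = Measure.pi (fun _ : Fin p => ν) := by
    refine (Measure.pi_eq (μ := fun _ : Fin p => ν) fun s hsm => ?_).symm
    rw [hμdef, Measure.map_apply hf (MeasurableSet.univ_pi hsm)]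
    have hpre : f ⁻¹' Set.pi Set.univ s = ⋂ l ∈ Finset.univ, w l ⁻¹' s l := by
      ext ω; simp [hfdef, Set.mem_pi]
    rw [hpre, hindep.measure_inter_preimage_eq_mul Finset.univ (fun l _ => hsm l)]
    exact Finset.prod_congr rfl fun l _ => by
      rw [← hνl l, Measure.map_apply (hmeas l) (hsm l)]
  -- permutation invariance of the joint law
  have hperm : ∀ σ : Equiv.Perm (Fin p), μ.map (fun x l => x (σ l)) = μ := by
    intro σ
    have hT : Measurable fun x : Fin p → ℝ => fun l => x (σ l) :=
      measurable_pi_lambda _ fun l => measurable_pi_apply (σ l)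
    rw [hμpi]
    refine (Measure.pi_eq (μ := fun _ : Fin p => ν) fun s hsm => ?_).symm
    rw [Measure.map_apply hT (MeasurableSet.univ_pi hsm)]
    have hpre : (fun x : Fin p → ℝ => fun l => x (σ l)) ⁻¹' Set.pi Set.univ s
        = Set.pi Set.univ fun m => s (σ.symm m) := by
      ext x
      simp only [Set.mem_preimage, Set.mem_pi, Set.mem_univ, true_implies]
      constructor
      · intro h m; have := h (σ.symm m); simpa using this
      · intro h l; have := h (σ l); simpa using this
    rw [hpre, Measure.pi_pi]
    exact Equiv.prod_comp σ.symm fun m => ν (s m)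
  -- R
  set R : Fin p → (Fin p → ℝ) → ℝ := fun a x => x a / ((∑ l, x l) / p) - 1 with hRdef
  have hmS : Measurable fun x : Fin p → ℝ => ∑ l, x l :=
    Finset.measurable_sum _ fun l _ => measurable_pi_apply l
  have hmR : ∀ a, Measurable (R a) := fun a =>
    ((measurable_pi_apply a).div (hmS.div_const _)).sub_const 1
  -- a.e. positivity in μ
  have hposμ : ∀ᵐ x ∂μ, ∀ l, 0 < x l := by
    have hset : MeasurableSet {x : Fin p → ℝ | ∀ l, 0 < x l} := by
      have h : {x : Fin p → ℝ | ∀ l, 0 < x l} = ⋂ l, {x | 0 < x l} := by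
        ext x; simp
      rw [h]
      exact MeasurableSet.iInter fun l =>
        measurableSet_lt measurable_const (measurable_pi_apply l)
    rw [hμdef, ae_map_iff hf.aemeasurable hset]
    filter_upwards [ae_all_iff.mpr hpos] with ω h using h
  -- a.e. bound
  have hbd : ∀ᵐ x ∂μ, ∀ l, |R l x| ≤ (p:ℝ) := by
    filter_upwards [hposμ] with x hx l
    have hS : 0 < ∑ m, x m := Finset.sum_pos (fun m _ => hx m) Finset.univ_nonempty
    have hle : x l ≤ ∑ m, x m := Finset.single_le_sum (fun m _ => (hx m).le) (Finset.mem_univ l)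
    have ht0 : 0 < x l / ((∑ m, x m) / p) := div_pos (hx l) (div_pos hS hpR)
    have ht1 : x l / ((∑ m, x m) / p) ≤ p := by
      rw [div_le_iff₀ (div_pos hS hpR)]
      calc x l ≤ ∑ m, x m := hle
        _ = (p:ℝ) * ((∑ m, x m) / p) := by field_simp
    simp only [hRdef]
    rw [abs_le]
    constructor <;> nlinarith
  -- a.e. sum of R is zero
  have hsum0 : ∀ᵐ x ∂μ, ∑ l, R l x = 0 := by
    filter_upwards [hposμ] with x hx
    have hS : 0 < ∑ m, x m := Finset.sum_pos (fun m _ => hx m) Finset.univ_nonempty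
    simp only [hRdef]
    rw [Finset.sum_sub_distrib, ← Finset.sum_div, Finset.sum_const, Finset.card_univ,
      Fintype.card_fin, nsmul_eq_mul, mul_one, div_div_eq_mul_div, sub_eq_zero,
      mul_comm, mul_div_assoc, div_self hS.ne', mul_one]
  -- integrability of quartic monomials
  have hint : ∀ a b c d : Fin p, Integrable (fun x => R a x * R b x * R c x * R d x) μ := by
    intro a b c d
    refine ⟨((((hmR a).mul (hmR b)).mul (hmR c)).mul (hmR d)).aestronglyMeasurable, ?_⟩
    refine HasFiniteIntegral.of_bounded (C := (p:ℝ)^4) ?_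
    filter_upwards [hbd] with x hx
    have h4 : ((p:ℝ))^4 = p*p*p*p := by ring
    rw [Real.norm_eq_abs, abs_mul, abs_mul, abs_mul, h4]
    gcongr
    · exact hx a
    · exact hx b
    · exact hx c
    · exact hx d
  -- the moments
  set M : Fin p → Fin p → Fin p → Fin p → ℝ :=
    fun a b c d => ∫ x, R a x * R b x * R c x * R d x ∂μ with hMdef
  have hMperm : ∀ (σ : Equiv.Perm (Fin p)) (a b c d : Fin p),
      M (σ a) (σ b) (σ c) (σ d) = M a b c d := by
    intro σ a b c d
    have hRσ : ∀ (e : Fin p) (x : Fin p → ℝ), R e (fun l => x (σ l)) = R (σ e) x := by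
      intro e x
      simp only [hRdef]
      rw [Equiv.sum_comp σ x]
    have hF : Measurable fun x => R a x * R b x * R c x * R d x :=
      (((hmR a).mul (hmR b)).mul (hmR c)).mul (hmR d)
    have h1 : ∫ x, R a x * R b x * R c x * R d x ∂(μ.map fun x l => x (σ l))
        = ∫ x, R a (fun l => x (σ l)) * R b (fun l => x (σ l)) * R c (fun l => x (σ l))
            * R d (fun l => x (σ l)) ∂μ :=
      integral_map (measurable_pi_lambda _ fun l => measurable_pi_apply (σ l)).aemeasurable
        hF.aestronglyMeasurable
    rw [hperm σ] at h1
    simp only [hRσ] at h1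
    simp only [hMdef]
    exact h1.symm
  have hSsum : ∀ a b c : Fin p, ∑ l, M a b c l = 0 := by
    intro a b c
    have h1 : ∑ l, M a b c l = ∫ x, ∑ l, R a x * R b x * R c x * R l x ∂μ := by
      simp only [hMdef]
      exact (integral_finset_sum Finset.univ fun l _ => hint a b c l).symm
    rw [h1]
    refine integral_eq_zero_of_ae ?_
    filter_upwards [hsum0] with x hx
    simp only [Pi.zero_apply]
    rw [← Finset.mul_sum, hx, mul_zero]
  -- equation 2 : M i i i i + (p-1) M i i i j = 0
  have hMl3 : ∀ l, l ≠ i → M i i i l = M i i i j := by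
    intro l hl
    by_cases hlj : l = j
    · rw [hlj]
    · have hσ := hMperm (Equiv.swap j l) i i i j
      rw [Equiv.swap_apply_of_ne_of_ne hij (Ne.symm hl), Equiv.swap_apply_left] at hσ
      exact hσ
  have heq2 : M i i i i + ((p:ℝ) - 1) * M i i i j = 0 := by
    have h0 := hSsum i i i
    rw [← Finset.sum_erase_add Finset.univ _ (Finset.mem_univ i)] at h0
    have hconst : ∑ l ∈ Finset.univ.erase i, M i i i l = ((p:ℝ) - 1) * M i i i j := by
      rw [Finset.sum_congr rfl fun l hl => hMl3 l (Finset.ne_of_mem_erase hl),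
        Finset.sum_const, Finset.card_erase_of_mem (Finset.mem_univ i), Finset.card_univ,
        Fintype.card_fin, nsmul_eq_mul, Nat.cast_sub (by omega : 1 ≤ p), Nat.cast_one]
    rw [hconst] at h0
    linarith
  -- equation 1 : (p-2) M i i j k + M i i i j + M i i j j = 0
  have hMl2 : ∀ l, l ≠ i → l ≠ j → M i i j l = M i i j k := by
    intro l hli hlj
    by_cases hlk : l = k
    · rw [hlk]
    · have hσ := hMperm (Equiv.swap k l) i i j k
      rw [Equiv.swap_apply_of_ne_of_ne hik (Ne.symm hli),
        Equiv.swap_apply_of_ne_of_ne hjk (Ne.symm hlj), Equiv.swap_apply_left] at hσ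
      exact hσ
  have hrearr : M i i j i = M i i i j := by
    simp only [hMdef]
    exact integral_congr_ae (Filter.Eventually.of_forall fun x => by ring)
  have heq1 : ((p:ℝ) - 2) * M i i j k + M i i i j + M i i j j = 0 := by
    have h0 := hSsum i i j
    rw [← Finset.sum_erase_add Finset.univ _ (Finset.mem_univ j),
      ← Finset.sum_erase_add _ _ (Finset.mem_erase.mpr ⟨hij, Finset.mem_univ i⟩)] at h0
    have hconst : ∑ l ∈ (Finset.univ.erase j).erase i, M i i j l
        = ((p:ℝ) - 2) * M i i j k := by
      rw [Finset.sum_congr rfl fun l hl => hMl2 l (Finset.ne_of_mem_erase hl)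
          (Finset.ne_of_mem_erase (Finset.mem_of_mem_erase hl)),
        Finset.sum_const, Finset.card_erase_of_mem
          (Finset.mem_erase.mpr ⟨hij, Finset.mem_univ i⟩),
        Finset.card_erase_of_mem (Finset.mem_univ j), Finset.card_univ, Fintype.card_fin,
        nsmul_eq_mul]
      congr 1
      rw [Nat.cast_sub (by omega : 1 ≤ p - 1), Nat.cast_sub (by omega : 1 ≤ p)]
      push_cast
      ring
    rw [hconst, hrearr] at h0
    linarith
  -- transfer to Ω
  have hGμ : ∀ G : (Fin p → ℝ) → ℝ, Measurable G → ∫ x, G x ∂μ = ∫ ω, G (f ω) ∂P := by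
    intro G hG
    rw [hμdef]
    exact integral_map hf.aemeasurable hG.aestronglyMeasurable
  have hη4' : η₄ = M i0 i0 i0 i0 := by
    have h2 : ∫ x, (R i0 x)^4 ∂μ = M i0 i0 i0 i0 := by
      simp only [hMdef]
      exact integral_congr_ae (Filter.Eventually.of_forall fun x => by ring)
    rw [hη₄]
    exact (hGμ (fun x => (R i0 x)^4) ((hmR i0).pow_const 4)).symm.trans h2
  have hη12' : η₁₂ = M i0 i0 i1 i1 := by
    have h2 : ∫ x, (R i0 x)^2 * (R i1 x)^2 ∂μ = M i0 i0 i1 i1 := by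
      simp only [hMdef]
      exact integral_congr_ae (Filter.Eventually.of_forall fun x => by ring)
    rw [hη₁₂]
    exact (hGμ (fun x => (R i0 x)^2 * (R i1 x)^2)
      (((hmR i0).pow_const 2).mul ((hmR i1).pow_const 2))).symm.trans h2
  have hM4 : M i i i i = M i0 i0 i0 i0 := by
    have hσ := hMperm (Equiv.swap i0 i) i0 i0 i0 i0
    rwa [Equiv.swap_apply_left] at hσ
  have hM22 : M i i j j = M i0 i0 i1 i1 := by
    obtain ⟨σ, hσ0, hσ1⟩ : ∃ σ : Equiv.Perm (Fin p), σ i0 = i ∧ σ i1 = j := by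
      have hj' : (Equiv.swap i0 i).symm j ≠ i0 := by
        intro h
        have hji := congrArg (Equiv.swap i0 i) h
        rw [Equiv.apply_symm_apply, Equiv.swap_apply_left] at hji
        exact hij hji.symm
      refine ⟨(Equiv.swap i1 ((Equiv.swap i0 i).symm j)).trans (Equiv.swap i0 i), ?_, ?_⟩
      · simp only [Equiv.trans_apply]
        rw [Equiv.swap_apply_of_ne_of_ne h01 (Ne.symm hj'), Equiv.swap_apply_left]
      · simp only [Equiv.trans_apply]
        rw [Equiv.swap_apply_left, Equiv.apply_symm_apply]
    have hσ := hMperm σ i0 i0 i1 i1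
    rwa [hσ0, hσ1] at hσ
  -- the target integral is M i i j k
  have h2 : ∫ x, (R i x)^2 * R j x * R k x ∂μ = M i i j k := by
    simp only [hMdef]
    exact integral_congr_ae (Filter.Eventually.of_forall fun x => by ring)
  have htarget : ∫ ω, (w i ω / ((∑ l, w l ω) / p) - 1) ^ 2 *
           (w j ω / ((∑ l, w l ω) / p) - 1) *
           (w k ω / ((∑ l, w l ω) / p) - 1) ∂P = M i i j k :=
    (hGμ (fun x => (R i x)^2 * R j x * R k x)
      ((((hmR i).pow_const 2).mul (hmR j)).mul (hmR k))).symm.trans h2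
  rw [htarget, hη4', hη12', ← hM4, ← hM22]
  have hp1 : ((p:ℝ) - 1) ≠ 0 := by
    have : (0:ℝ) < (p:ℝ) - 1 := by linarith
    exact this.ne'
  have hp2 : ((p:ℝ) - 2) ≠ 0 := by
    have : (0:ℝ) < (p:ℝ) - 2 := by linarith
    exact this.ne'
  field_simp
  linear_combination ((p:ℝ)-1)*heq1 - heq2
end

section
/- Let S be a p×p Hermitian complex matrix, r ∈ ℂ^p, and z ∈ ℂ with Im z > 0. Then for every p×p complex matrix A, | tr( ((S + r r* − z I_p)^{−1} − (S − z I_p)^{−1}) A ) | ≤ ‖A‖ / Im z, where r r* is the rank-one matrix with entries r_i conj(r_j), ‖A‖ is the spectral norm of A, and both resolvents exist since Im z > 0. -/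
open scoped BigOperators ComplexOrder
open Matrix

/-- The spectral norm of a complex matrix. -/
noncomputable def specNorm {p n : ℕ} (A : Matrix (Fin p) (Fin n) ℂ) : ℝ :=
  ‖LinearMap.toContinuousLinearMap (Matrix.toEuclideanLin A)‖


-- helper: Hermitian quadratic form has zero imaginary part
lemma herm_quad_im {p : ℕ} {M : Matrix (Fin p) (Fin p) ℂ} (hM : M.IsHermitian)
    (v : Fin p → ℂ) : (star v ⬝ᵥ M *ᵥ v).im = 0 := by
  rw [← Complex.conj_eq_iff_im]
  calc (starRingEnd ℂ) (star v ⬝ᵥ M *ᵥ v)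
      = star (star v ⬝ᵥ M *ᵥ v) := rfl
    _ = star (M *ᵥ v) ⬝ᵥ v := by rw [star_dotProduct]; simp
    _ = star v ᵥ* Mᴴ ⬝ᵥ v := by rw [star_mulVec]
    _ = star v ⬝ᵥ Mᴴ *ᵥ v := by rw [dotProduct_mulVec]
    _ = star v ⬝ᵥ M *ᵥ v := by rw [hM]

lemma dot_self_re {p : ℕ} (v : Fin p → ℂ) :
    star v ⬝ᵥ v = ((∑ i, Complex.normSq (v i) : ℝ) : ℂ) := by
  simp [dotProduct, Complex.normSq_eq_conj_mul_self]

lemma herm_resolvent_isUnit {p : ℕ} {M : Matrix (Fin p) (Fin p) ℂ} (hM : M.IsHermitian)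
    {z : ℂ} (hz : z.im ≠ 0) : IsUnit (M - z • 1).det := by
  rw [isUnit_iff_ne_zero]
  intro h
  obtain ⟨v, hv, hMv⟩ := (Matrix.exists_mulVec_eq_zero_iff).2 h
  have h1 : M *ᵥ v = z • v := by
    have := hMv
    rw [Matrix.sub_mulVec, Matrix.smul_mulVec, Matrix.one_mulVec, sub_eq_zero] at this
    exact this
  have h2 : star v ⬝ᵥ M *ᵥ v = z * (star v ⬝ᵥ v) := by
    rw [h1]; simp [dotProduct_smul, smul_eq_mul]
  have h3 := herm_quad_im hM v
  rw [h2, dot_self_re] at h3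
  simp [Complex.mul_im] at h3
  have hpos : 0 < ∑ i, Complex.normSq (v i) := by
    have : ∃ i, v i ≠ 0 := by
      by_contra hc; push_neg at hc; exact hv (funext hc)
    obtain ⟨i, hi⟩ := this
    exact Finset.sum_pos' (fun j _ => Complex.normSq_nonneg _)
      ⟨i, Finset.mem_univ i, Complex.normSq_pos.2 hi⟩
  rcases h3 with h3 | h3
  · exact hz h3
  · exact hpos.ne' h3

lemma resolvent_quad_im {p : ℕ} {M : Matrix (Fin p) (Fin p) ℂ} (hM : M.IsHermitian)
    {z : ℂ} (hdet : IsUnit (M - z • 1).det) (q : Fin p → ℂ) :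
    (star q ⬝ᵥ (M - z • 1)⁻¹ *ᵥ q).im
      = z.im * ∑ i, Complex.normSq (((M - z • 1)⁻¹ *ᵥ q) i) := by
  obtain ⟨u, hu⟩ : ∃ u, (M - z • 1)⁻¹ *ᵥ q = u := ⟨_, rfl⟩
  rw [hu]
  have hq : q = (M - z • 1) *ᵥ u := by
    rw [← hu, Matrix.mulVec_mulVec, Matrix.mul_nonsing_inv _ hdet, Matrix.one_mulVec]
  have key : star q ⬝ᵥ u = star u ⬝ᵥ M *ᵥ u - (starRingEnd ℂ) z * (star u ⬝ᵥ u) := by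
    calc star q ⬝ᵥ u = star ((M - z • 1) *ᵥ u) ⬝ᵥ u := by rw [← hq]
      _ = (star u ᵥ* (M - z • 1)ᴴ) ⬝ᵥ u := by rw [star_mulVec]
      _ = star u ⬝ᵥ ((M - z • 1)ᴴ *ᵥ u) := by rw [← dotProduct_mulVec]
      _ = star u ⬝ᵥ ((Mᴴ - (starRingEnd ℂ) z • 1) *ᵥ u) := by
            congr 1
            simp [Matrix.conjTranspose_sub, Matrix.conjTranspose_smul]
      _ = star u ⬝ᵥ M *ᵥ u - (starRingEnd ℂ) z * (star u ⬝ᵥ u) := by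
            rw [Matrix.sub_mulVec, Matrix.smul_mulVec, Matrix.one_mulVec,
              dotProduct_sub, dotProduct_smul, hM]
            rfl
  have h1 := herm_quad_im hM u
  rw [key]
  rw [Complex.sub_im, h1, Complex.mul_im, dot_self_re]
  simp

lemma trace_vecMulVec_mul {p : ℕ} (u v : Fin p → ℂ) (B : Matrix (Fin p) (Fin p) ℂ) :
    Matrix.trace (Matrix.vecMulVec u v * B) = v ⬝ᵥ (B *ᵥ u) := by
  simp only [Matrix.trace, Matrix.diag_apply, Matrix.mul_apply, Matrix.vecMulVec_apply,
    dotProduct, Matrix.mulVec, Finset.mul_sum]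
  rw [Finset.sum_comm]
  congr 1; ext j; congr 1; ext i; ring

lemma vecMulVec_mulVec {p : ℕ} (u v w : Fin p → ℂ) :
    Matrix.vecMulVec u v *ᵥ w = (v ⬝ᵥ w) • u := by
  funext i
  simp only [Matrix.mulVec, Matrix.vecMulVec_apply, dotProduct, Pi.smul_apply, smul_eq_mul,
    Finset.sum_mul, Finset.mul_sum]
  congr 1; ext j; ring

lemma dot_bound {p : ℕ} (A : Matrix (Fin p) (Fin p) ℂ) (x y : Fin p → ℂ) :
    ‖star x ⬝ᵥ (A *ᵥ y)‖
      ≤ specNorm A * Real.sqrt (∑ i, Complex.normSq (x i))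
          * Real.sqrt (∑ i, Complex.normSq (y i)) := by
  set x' : EuclideanSpace ℂ (Fin p) := (WithLp.equiv 2 _).symm x with hx'
  set y' : EuclideanSpace ℂ (Fin p) := (WithLp.equiv 2 _).symm y with hy'
  have h1 : star x ⬝ᵥ (A *ᵥ y) = inner ℂ x' (Matrix.toEuclideanLin A y') := by
    rw [dotProduct_comm]; rfl
  have hnx : ‖x'‖ = Real.sqrt (∑ i, Complex.normSq (x i)) := by
    rw [EuclideanSpace.norm_eq]
    congr 1
    refine Finset.sum_congr rfl fun i _ => ?_
    show ‖x i‖ ^ 2 = _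
    rw [Complex.sq_norm]
  have hny : ‖y'‖ = Real.sqrt (∑ i, Complex.normSq (y i)) := by
    rw [EuclideanSpace.norm_eq]
    congr 1
    refine Finset.sum_congr rfl fun i _ => ?_
    show ‖y i‖ ^ 2 = _
    rw [Complex.sq_norm]
  rw [h1]
  calc ‖(inner ℂ x' (Matrix.toEuclideanLin A y') : ℂ)‖
      ≤ ‖x'‖ * ‖Matrix.toEuclideanLin A y'‖ := norm_inner_le_norm _ _
    _ ≤ ‖x'‖ * (specNorm A * ‖y'‖) := by
        gcongr
        exact (LinearMap.toContinuousLinearMap (Matrix.toEuclideanLin A)).le_opNorm y'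
    _ = specNorm A * Real.sqrt (∑ i, Complex.normSq (x i))
          * Real.sqrt (∑ i, Complex.normSq (y i)) := by rw [hnx, hny]; ring

/-- Rank-one perturbation bound for resolvents: if `S` is Hermitian, `r ∈ ℂ^p`, and
`Im z > 0`, then for every matrix `A`,
`| tr( ((S + r r* − z I)⁻¹ − (S − z I)⁻¹) A ) | ≤ ‖A‖ / Im z`. -/
theorem resolvent_rank_one_trace_bound {p : ℕ} (S : Matrix (Fin p) (Fin p) ℂ)
    (hS : S.IsHermitian) (r : Fin p → ℂ) (z : ℂ) (hz : 0 < z.im)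
    (A : Matrix (Fin p) (Fin p) ℂ) :
    ‖Matrix.trace
        (((S + Matrix.of (fun i j => r i * (starRingEnd ℂ) (r j)) - z • 1)⁻¹ -
            (S - z • 1)⁻¹) * A)‖ ≤ specNorm A / z.im := by
  have hspec : 0 ≤ specNorm A := norm_nonneg _
  by_cases hr : r = 0
  · subst hr
    have h0 : Matrix.of (fun i j => (0 : Fin p → ℂ) i * (starRingEnd ℂ) ((0 : Fin p → ℂ) j))
        = (0 : Matrix (Fin p) (Fin p) ℂ) := by ext i j; simp
    rw [h0, add_zero, sub_self, Matrix.zero_mul, Matrix.trace_zero, norm_zero]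
    exact div_nonneg hspec hz.le
  -- setup
  set Q : Matrix (Fin p) (Fin p) ℂ := Matrix.of (fun i j => r i * (starRingEnd ℂ) (r j)) with hQ
  have hQvv : Q = Matrix.vecMulVec r (star r) := by
    ext i j; simp [hQ, Matrix.vecMulVec_apply]
  have hQherm : Q.IsHermitian := by
    ext i j
    simp [hQ, Matrix.conjTranspose_apply, mul_comm]
  have hdet1 : IsUnit (S - z • 1).det := herm_resolvent_isUnit hS hz.ne'
  have hdet2 : IsUnit (S + Q - z • 1).det :=
    herm_resolvent_isUnit (hS.add hQherm) hz.ne'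
  set R : Matrix (Fin p) (Fin p) ℂ := (S - z • 1)⁻¹ with hR
  set T : Matrix (Fin p) (Fin p) ℂ := (S + Q - z • 1)⁻¹ with hT
  set u : Fin p → ℂ := R *ᵥ r with hu
  have hun : u ≠ 0 := by
    intro h
    apply hr
    have : (S - z • 1) *ᵥ u = r := by
      rw [hu, Matrix.mulVec_mulVec, Matrix.mul_nonsing_inv _ hdet1, Matrix.one_mulVec]
    rw [← this, h, Matrix.mulVec_zero]
  set n : ℝ := ∑ i, Complex.normSq (u i) with hn
  have hnpos : 0 < n := by
    have : ∃ i, u i ≠ 0 := by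
      by_contra hc; push_neg at hc; exact hun (funext hc)
    obtain ⟨i, hi⟩ := this
    exact Finset.sum_pos' (fun j _ => Complex.normSq_nonneg _)
      ⟨i, Finset.mem_univ i, Complex.normSq_pos.2 hi⟩
  set w : ℂ := 1 + star r ⬝ᵥ u with hw
  have hwim : w.im = z.im * n := by
    rw [hw, Complex.add_im, Complex.one_im, zero_add, hu, hR, hn]
    exact resolvent_quad_im hS hdet1 r
  have hwabs : z.im * n ≤ ‖w‖ := by
    rw [← hwim]
    exact le_trans (le_abs_self _) (Complex.abs_im_le_norm w)
  have hwne : w ≠ 0 := by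
    have him : w.im ≠ 0 := by rw [hwim]; exact (mul_pos hz hnpos).ne'
    intro h
    rw [h] at him
    exact him rfl
  -- resolvent identity
  have hres : T - R = -(T * Q * R) := by
    have e1 : T * (S + Q - z • 1) = 1 := Matrix.nonsing_inv_mul _ hdet2
    have e2 : (S - z • 1) * R = 1 := Matrix.mul_nonsing_inv _ hdet1
    have hQd : Q = (S + Q - z • 1) - (S - z • 1) := by abel
    have : T * Q * R = R - T := by
      calc T * Q * R = T * ((S + Q - z • 1) - (S - z • 1)) * R := by rw [← hQd]
        _ = T * (S + Q - z • 1) * R - T * (S - z • 1) * R := by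
            rw [Matrix.mul_sub, Matrix.sub_mul]
        _ = R - T := by
            rw [e1, Matrix.one_mul, Matrix.mul_assoc T (S - z • 1) R, e2, Matrix.mul_one]
    rw [this]; abel
  -- trace formula
  have htr : Matrix.trace ((T - R) * A) = -(star r ⬝ᵥ ((R * A * T) *ᵥ r)) := by
    rw [hres]
    rw [Matrix.neg_mul, Matrix.trace_neg, neg_inj]
    calc Matrix.trace (T * Q * R * A)
        = Matrix.trace (Q * (R * A * T)) := by
          rw [show T * Q * R * A = T * (Q * (R * A)) by simp only [Matrix.mul_assoc],
            Matrix.trace_mul_comm]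
          simp only [Matrix.mul_assoc]
      _ = star r ⬝ᵥ ((R * A * T) *ᵥ r) := by rw [hQvv, trace_vecMulVec_mul]
  -- y = w⁻¹ • u
  have hy : T *ᵥ r = w⁻¹ • u := by
    have h1 : (S + Q - z • 1) *ᵥ u = w • r := by
      rw [Matrix.sub_mulVec, Matrix.add_mulVec, hQvv, _root_.vecMulVec_mulVec]
      have h2 : (S - z • 1) *ᵥ u = r := by
        rw [hu, Matrix.mulVec_mulVec, Matrix.mul_nonsing_inv _ hdet1, Matrix.one_mulVec]
      rw [Matrix.sub_mulVec] at h2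
      rw [hw, add_smul, one_smul, ← h2]
      abel
    have h3 : u = w • (T *ᵥ r) := by
      have h4 := congrArg (fun v => T *ᵥ v) h1
      have e : T * (S + Q - z • 1) = 1 := Matrix.nonsing_inv_mul _ hdet2
      rw [Matrix.mulVec_mulVec, e, Matrix.one_mulVec] at h4
      rw [h4, Matrix.mulVec_smul]
    rw [h3, smul_smul, inv_mul_cancel₀ hwne, one_smul]
  -- rewrite trace as inner product form
  have hC : star r ⬝ᵥ ((R * A * T) *ᵥ r)
      = star (Rᴴ *ᵥ r) ⬝ᵥ (A *ᵥ (T *ᵥ r)) := by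
    rw [star_mulVec, Matrix.conjTranspose_conjTranspose,
      ← Matrix.mulVec_mulVec, ← Matrix.mulVec_mulVec, dotProduct_mulVec]
  -- commutation of R and Rᴴ
  have hRH : Rᴴ = (S - (starRingEnd ℂ) z • 1)⁻¹ := by
    rw [hR, Matrix.conjTranspose_nonsing_inv]
    congr 1
    rw [Matrix.conjTranspose_sub, hS, Matrix.conjTranspose_smul, Matrix.conjTranspose_one]
    rfl
  have hcomm0 : (S - z • 1) * (S - (starRingEnd ℂ) z • 1)
      = (S - (starRingEnd ℂ) z • 1) * (S - z • 1) := by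
    simp only [Matrix.sub_mul, Matrix.mul_sub, Matrix.smul_mul, Matrix.mul_smul,
      Matrix.one_mul, Matrix.mul_one, smul_sub, smul_smul]
    rw [mul_comm ((starRingEnd ℂ) z) z]
    abel
  have hcomm : R * Rᴴ = Rᴴ * R := by
    rw [hRH, hR, ← Matrix.mul_inv_rev, ← Matrix.mul_inv_rev, hcomm0]
  have hx1 : star (Rᴴ *ᵥ r) ⬝ᵥ (Rᴴ *ᵥ r) = star u ⬝ᵥ u := by
    rw [hu, star_mulVec, star_mulVec, Matrix.conjTranspose_conjTranspose,
      ← Matrix.dotProduct_mulVec, ← Matrix.dotProduct_mulVec, Matrix.mulVec_mulVec,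
      Matrix.mulVec_mulVec, hcomm]
  have hxsum : ∑ i, Complex.normSq ((Rᴴ *ᵥ r) i) = n := by
    rw [dot_self_re, dot_self_re] at hx1
    exact_mod_cast hx1
  have hysum : ∑ i, Complex.normSq ((w⁻¹ • u) i) = Complex.normSq w⁻¹ * n := by
    rw [hn, Finset.mul_sum]
    refine Finset.sum_congr rfl fun i _ => ?_
    simp [Complex.normSq_mul]
  have hwpos : 0 < ‖w‖ := by
    simpa using (norm_pos_iff.mpr hwne)
  -- final estimate
  rw [htr, norm_neg, hC, hy]
  refine le_trans (dot_bound A _ _) ?_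
  rw [hxsum, hysum]
  have h5 : Real.sqrt (Complex.normSq w⁻¹ * n) = Real.sqrt n / ‖w‖ := by
    rw [Real.sqrt_mul (Complex.normSq_nonneg _), ← Complex.norm_def, norm_inv]
    rw [div_eq_mul_inv, mul_comm]
  rw [h5]
  calc specNorm A * Real.sqrt n * (Real.sqrt n / ‖w‖)
      = specNorm A * (Real.sqrt n * Real.sqrt n) / ‖w‖ := by ring
    _ = specNorm A * n / ‖w‖ := by rw [Real.mul_self_sqrt hnpos.le]
    _ ≤ specNorm A * n / (z.im * n) := by
        exact div_le_div_of_nonneg_left (mul_nonneg hspec hnpos.le)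
          (mul_pos hz hnpos) hwabs
    _ = specNorm A / z.im := by
        field_simp
end
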